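/- arXiv:1606.02670 — 2 statements merged into one kernel-verified Lean document; each statement's English description precedes it below -/
import Mathlib

section
/- Let A be a commutative ring graded by ℕ, let C be a graded subring of A, and let d be a natural number. Suppose A is generated as a C-module by a set of homogeneous elements each of degree at most d. Let ζ ∈ A be an element such that ζ·c = 0 for every homogeneous element c of C of positive degree. Then ζ·β = 0 for every homogeneous element β of A of degree strictly greater than d. (This is the cup-product computation at the heart of the paper's key lemma: if H*(X₁) is a module over the subring φ₁*(H*(Y₁)) generated by homogeneous elements of degree ≤ 2f, and the fiber class [Z] annihilates all positive-degree elements pulled back from the base, then [Z] annihilates every cohomology class of degree exceeding 2f.) -/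
/-- If a commutative `ℕ`-graded ring `A` is generated, as a module over a graded
subring `C`, by homogeneous elements of degree at most `d`, and `ζ ∈ A`
annihilates every positive-degree homogeneous element of `C`, then `ζ`
annihilates every homogeneous element of `A` of degree `> d`. -/
theorem annihilates_high_degree_of_annihilates_base
    {A : Type*} [CommRing A] (𝒜 : ℕ → AddSubgroup A) [GradedRing 𝒜]
    (C : Subring A)
    (hCgr : ∀ c ∈ C, ∀ i : ℕ, (DirectSum.decompose 𝒜 c i : A) ∈ C)
    (d : ℕ) (S : Set A)
    (hShom : ∀ s ∈ S, ∃ i ≤ d, s ∈ 𝒜 i)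
    (hgen : ∀ a : A, ∃ (n : ℕ) (c : Fin n → A) (s : Fin n → A),
      (∀ j, c j ∈ C) ∧ (∀ j, s j ∈ S) ∧ a = ∑ j, c j * s j)
    (ζ : A)
    (hζ : ∀ c ∈ C, ∀ i : ℕ, 0 < i → c ∈ 𝒜 i → ζ * c = 0) :
    ∀ β : A, ∀ i : ℕ, d < i → β ∈ 𝒜 i → ζ * β = 0 := by
  intro β i hdi hβ
  obtain ⟨n, c, s, hc, hs, hsum⟩ := hgen β
  have hβi : β = ∑ j, (DirectSum.decompose 𝒜 (c j * s j) i : A) := by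
    conv_lhs => rw [← DirectSum.decompose_of_mem_same 𝒜 hβ, hsum]
    rw [DirectSum.decompose_sum, DFinsupp.finset_sum_apply,
      AddSubmonoidClass.coe_finset_sum]
  rw [hβi, Finset.mul_sum]
  refine Finset.sum_eq_zero fun j _ => ?_
  obtain ⟨k, hkd, hk⟩ := hShom (s j) (hs j)
  have hdec := DirectSum.coe_decompose_mul_of_right_mem_of_le (𝒜 := 𝒜) (a := c j)
    (n := i) hk (le_of_lt (lt_of_le_of_lt hkd hdi))
  rw [hdec, ← mul_assoc,
    hζ _ (hCgr _ (hc j) _) (i - k) (by omega) (SetLike.coe_mem _), zero_mul]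
end

section
/- Let A be a commutative ring graded by ℕ with A_i = 0 for all i > N (top degree N), and suppose the pairing into the top degree is nondegenerate in the following sense: for every m ≤ N and every nonzero homogeneous a ∈ A_m there exists a homogeneous b ∈ A_{N-m} with a·b ≠ 0. Let C be a graded subring of A, let d < m ≤ N be natural numbers, and suppose A is generated as a C-module by a set of homogeneous elements each of degree at most d. If ζ ∈ A_{N-m} satisfies ζ·c = 0 for every homogeneous element c of C of positive degree, then ζ = 0. (This abstracts the conclusion of the paper's key lemma: by Poincaré duality on the 2n-dimensional projective manifold X₀, the class [Z] ∈ H^{2n-2z}(X₀) of a fiber Z of dimension z > f must vanish, contradicting the effectivity of Z; hence every fiber of φ₀ has dimension at most f = dim X₁ - dim Y₁.) -/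
/-- Poincaré-duality vanishing: in a commutative `ℕ`-graded ring `A` with top
degree `N` and nondegenerate pairing into the top degree, if `A` is generated
as a module over a graded subring `C` by homogeneous elements of degree `≤ d`,
and `ζ ∈ A_{N-m}` (with `d < m ≤ N`) annihilates every positive-degree
homogeneous element of `C`, then `ζ = 0`. -/
theorem vanishing_of_fiber_class
    {A : Type*} [CommRing A] (𝒜 : ℕ → AddSubgroup A) [GradedRing 𝒜]
    (N : ℕ)
    (hTop : ∀ i : ℕ, N < i → ∀ a ∈ 𝒜 i, a = 0)
    (hPair : ∀ m ≤ N, ∀ a ∈ 𝒜 m, a ≠ 0 → ∃ b ∈ 𝒜 (N - m), a * b ≠ 0)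
    (C : Subring A)
    (hCgr : ∀ c ∈ C, ∀ i : ℕ, (DirectSum.decompose 𝒜 c i : A) ∈ C)
    (d m : ℕ) (hdm : d < m) (hmN : m ≤ N)
    (S : Set A)
    (hShom : ∀ s ∈ S, ∃ i ≤ d, s ∈ 𝒜 i)
    (hgen : ∀ a : A, ∃ (n : ℕ) (c : Fin n → A) (s : Fin n → A),
      (∀ j, c j ∈ C) ∧ (∀ j, s j ∈ S) ∧ a = ∑ j, c j * s j)
    (ζ : A) (hζmem : ζ ∈ 𝒜 (N - m))
    (hζ : ∀ c ∈ C, ∀ i : ℕ, 0 < i → c ∈ 𝒜 i → ζ * c = 0) :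
    ζ = 0 := by
  classical
  by_contra hne
  obtain ⟨b, hb, hmul⟩ := hPair (N - m) (Nat.sub_le N m) ζ hζmem hne
  rw [Nat.sub_sub_self hmN] at hb
  apply hmul
  have hζb : ζ * b ∈ 𝒜 N := by
    have := SetLike.mul_mem_graded hζmem hb
    rwa [Nat.sub_add_cancel hmN] at this
  obtain ⟨n, c, s, hc, hs, hbs⟩ := hgen b
  have key : ∀ j : Fin n, (DirectSum.decompose 𝒜 (ζ * (c j * s j)) N : A) = 0 := by
    intro j
    obtain ⟨i, hid, hsi⟩ := hShom (s j) (hs j)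
    have hcomp : ζ * c j = ζ * (DirectSum.decompose 𝒜 (c j) 0 : A) := by
      conv_lhs => rw [← DirectSum.sum_support_decompose 𝒜 (c j)]
      rw [Finset.mul_sum]
      refine Finset.sum_eq_single 0 (fun k _ hk => ?_) (fun h0 => ?_)
      · exact hζ _ (hCgr _ (hc j) k) k (Nat.pos_of_ne_zero hk) (SetLike.coe_mem _)
      · rw [DFinsupp.notMem_support_iff.mp h0]; simp
    have hmem : ζ * (c j * s j) ∈ 𝒜 (N - m + 0 + i) := by
      rw [← mul_assoc, hcomp]
      exact SetLike.mul_mem_graded (SetLike.mul_mem_graded hζmem (SetLike.coe_mem _)) hsi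
    refine DirectSum.decompose_of_mem_ne 𝒜 hmem ?_
    omega
  have hz : (DirectSum.decompose 𝒜 (ζ * b) N : A) = 0 := by
    rw [hbs, Finset.mul_sum, DirectSum.decompose_sum, DFinsupp.finset_sum_apply]
    push_cast
    exact Finset.sum_eq_zero fun j _ => key j
  rwa [DirectSum.decompose_of_mem_same 𝒜 hζb] at hz
end
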